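/- Let p, q, K be integers with 1 ≤ q ≤ p, K ≥ 1, and let λ ≥ 0. Define Q_{2p}(z) = Σ_{l∈ℤ} sinc(π(z+l))^{2p+2}, Q_{2p−2q}(z) = Σ_{l∈ℤ} sinc(π(z+l))^{2p−2q+2}, φ(u, x) = Q_{2p}(u/K)^{−1/2} Σ_{l∈ℤ} sinc(π(u/K + l))^{p+1} exp(−2πi·x·(u + lK)), μ(u) = (2πu)^{2q} sinc(πu/K)^{2q} Q_{2p−2q}(u/K)/Q_{2p}(u/K), and W(x, t) = ∫_0^K φ(u, x)·conj(φ(u, t))/(1 + λμ(u)) du. Then for all x, t ∈ ℝ, W(x, t) = ∫_{−∞}^{∞} sinc(πu/K)^{p+1} · φ(u, x) · exp(2πi·t·u) / [Q_{2p}(u/K)^{1/2}·(1 + λμ(u))] du, i.e. the kernel W admits a Fourier-integral representation over the whole real line. -/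

import Mathlib

open Real MeasureTheory ComplexConjugate

/-- `_root_.sinc x = sin x / x` for `x ≠ 0`, and `_root_.sinc 0 = 1`. -/
noncomputable def _root_.sinc (x : ℝ) : ℝ := if x = 0 then 1 else Real.sin x / x

/-- `Q_n(z) = Σ_{l ∈ ℤ} _root_.sinc(π(z+l))^n` (here `n` is the power, so `Q_{2p}` of the
paper is `Qs (2*p+2)` and `Q_{2p-2q}` is `Qs (2*p-2*q+2)`). -/
noncomputable def Qs (n : ℕ) (z : ℝ) : ℝ := ∑' l : ℤ, _root_.sinc (Real.pi * (z + l)) ^ n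

/-- `φ(u,x) = Q_{2p}(u/K)^{−1/2} Σ_{l ∈ ℤ} _root_.sinc(π(u/K + l))^{p+1} exp(−2πi x (u + lK))`. -/
noncomputable def phic (K p : ℕ) (u x : ℝ) : ℂ :=
  (((Real.sqrt (Qs (2 * p + 2) (u / K)))⁻¹ : ℝ) : ℂ) *
    ∑' l : ℤ, ((_root_.sinc (Real.pi * (u / K + l)) ^ (p + 1) : ℝ) : ℂ) *
      Complex.exp (-2 * (Real.pi : ℂ) * Complex.I * (x : ℂ) * ((u : ℂ) + (l : ℂ) * (K : ℂ)))

/-- `μ(u) = (2πu)^{2q} _root_.sinc(πu/K)^{2q} Q_{2p−2q}(u/K)/Q_{2p}(u/K)`. -/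
noncomputable def muc (K p q : ℕ) (u : ℝ) : ℝ :=
  (2 * Real.pi * u) ^ (2 * q) * _root_.sinc (Real.pi * u / K) ^ (2 * q) *
    Qs (2 * p - 2 * q + 2) (u / K) / Qs (2 * p + 2) (u / K)

/-- The asymptotic equivalent kernel on ℝ:
`W(x,t) = ∫_0^K φ(u,x) conj(φ(u,t)) / (1 + λμ(u)) du`. -/
noncomputable def Wker (K p q : ℕ) (lam : ℝ) (x t : ℝ) : ℂ :=
  ∫ u in (0:ℝ)..(K : ℝ),
    phic K p u x * conj (phic K p u t) / (((1 + lam * muc K p q u : ℝ)) : ℂ)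

namespace Aux

lemma abs_sinc_le_one (x : ℝ) : |_root_.sinc x| ≤ 1 := by
  unfold _root_.sinc
  split_ifs with h
  · norm_num
  · rw [abs_div]
    exact div_le_one_of_le₀ (Real.abs_sin_le_abs) (abs_nonneg x)

lemma sinc_pi_sq_le (w : ℝ) : _root_.sinc (Real.pi * w) ^ 2 ≤ 2 / (1 + w ^ 2) := by
  rcases le_or_gt (w ^ 2) 1 with h | h
  · have h1 : _root_.sinc (Real.pi * w) ^ 2 ≤ 1 := by
      rw [← sq_abs]
      exact pow_le_one₀ (abs_nonneg _) (abs_sinc_le_one _)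
    calc _root_.sinc (Real.pi * w) ^ 2 ≤ 1 := h1
      _ ≤ 2 / (1 + w ^ 2) := by rw [le_div_iff₀ (by positivity)]; linarith
  · have hw : w ≠ 0 := by intro h0; rw [h0] at h; norm_num at h
    have hw2 : 0 < w ^ 2 := by positivity
    have hpw : Real.pi * w ≠ 0 := mul_ne_zero Real.pi_ne_zero hw
    have h1 : _root_.sinc (Real.pi * w) ^ 2 = Real.sin (Real.pi * w) ^ 2 / (Real.pi * w) ^ 2 := by
      unfold _root_.sinc; rw [if_neg hpw, div_pow]
    have h2 : Real.sin (Real.pi * w) ^ 2 / (Real.pi * w) ^ 2 ≤ 1 / w ^ 2 := by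
      apply div_le_div₀ (by norm_num) (Real.sin_sq_le_one _) hw2
      nlinarith [Real.pi_gt_three, sq_nonneg w, mul_pow Real.pi w 2, sq_nonneg (Real.pi - 3), sq_nonneg (Real.pi*w)]
    have h3 : 1 / w ^ 2 ≤ 2 / (1 + w ^ 2) := by
      rw [div_le_div_iff₀ hw2 (by positivity)]; linarith
    rw [h1]; exact h2.trans h3

/-- |_root_.sinc(πw)|^n ≤ 2/(1+w²) for n ≥ 2. -/
lemma abs_sinc_pi_pow_le (w : ℝ) {n : ℕ} (hn : 2 ≤ n) :
    |_root_.sinc (Real.pi * w)| ^ n ≤ 2 / (1 + w ^ 2) := by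
  calc |_root_.sinc (Real.pi * w)| ^ n ≤ |_root_.sinc (Real.pi * w)| ^ 2 :=
        pow_le_pow_of_le_one (abs_nonneg _) (abs_sinc_le_one _) hn
    _ = _root_.sinc (Real.pi * w) ^ 2 := sq_abs _
    _ ≤ 2 / (1 + w ^ 2) := sinc_pi_sq_le w

/-- Jordan: _root_.sinc(πw) ≥ 2/π for |w| ≤ 1/2. -/
lemma sinc_pi_lower (w : ℝ) (hw : |w| ≤ 1 / 2) : 2 / Real.pi ≤ _root_.sinc (Real.pi * w) := by
  rcases eq_or_ne w 0 with h0 | h0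
  · simp only [h0, mul_zero]
    unfold _root_.sinc
    rw [if_pos rfl]
    rw [div_le_one₀ Real.pi_pos]
    linarith [Real.pi_gt_three]
  · have hpw : Real.pi * w ≠ 0 := mul_ne_zero Real.pi_ne_zero h0
    have habs : |Real.pi * w| ≤ Real.pi / 2 := by
      rw [abs_mul, abs_of_pos Real.pi_pos]
      calc Real.pi * |w| ≤ Real.pi * (1 / 2) := by
            exact mul_le_mul_of_nonneg_left hw Real.pi_pos.le
        _ = Real.pi / 2 := by ring
    have key := Real.mul_abs_le_abs_sin habs
    -- 2/π * |πw| ≤ |sin(πw)|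
    have hsgn : 0 < Real.sin (Real.pi * w) / (Real.pi * w) ∨ True := Or.inr trivial
    unfold _root_.sinc
    rw [if_neg hpw]
    -- sin(πw)/(πw) = |sin(πw)|/|πw| since sin(πw) and πw have the same sign… use even symmetry
    have heq : Real.sin (Real.pi * w) / (Real.pi * w) = |Real.sin (Real.pi * w)| / |Real.pi * w| := by
      rcases lt_or_gt_of_ne h0 with hneg | hpos
      · have hx : Real.pi * w < 0 := mul_neg_of_pos_of_neg Real.pi_pos hneg
        have hx2 : -Real.pi < Real.pi * w := by
          nlinarith [abs_le.1 habs, Real.pi_pos]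
        have hsin : Real.sin (Real.pi * w) ≤ 0 := by
          have := Real.sin_nonpos_of_nonpos_of_neg_pi_le hx.le (by linarith)
          exact this
        rw [abs_of_nonpos hsin, abs_of_neg hx, neg_div_neg_eq]
      · have hx : 0 < Real.pi * w := mul_pos Real.pi_pos hpos
        have hx2 : Real.pi * w ≤ Real.pi := by
          nlinarith [abs_le.1 habs, Real.pi_pos]
        have hsin : 0 ≤ Real.sin (Real.pi * w) := Real.sin_nonneg_of_nonneg_of_le_pi hx.le hx2
        rw [abs_of_nonneg hsin, abs_of_pos hx]
    rw [heq, le_div_iff₀ (by positivity)]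
    calc 2 / Real.pi * |Real.pi * w| = |Real.pi * w| * (2 / Real.pi) := by ring
      _ ≤ |Real.sin (Real.pi * w)| := by rw [mul_comm]; exact key

lemma summable_nat_inv_one_add_sq : Summable (fun n : ℕ => ((1:ℝ) + (n:ℝ) ^ 2)⁻¹) := by
  rw [← summable_nat_add_iff 1]
  have hs : Summable (fun n : ℕ => ((n:ℝ) + 1)⁻¹ ^ 2) := by
    have := Real.summable_one_div_nat_pow.mpr (by norm_num : 1 < 2)
    rw [← summable_nat_add_iff 1] at this
    simpa [one_div, inv_pow] using this
  apply Summable.of_nonneg_of_le (fun n => by positivity) _ hs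
  intro n
  rw [inv_pow]
  apply inv_anti₀ (by positivity)
  push_cast
  nlinarith [sq_nonneg ((n:ℝ))]

lemma summable_int_inv_one_add_sq : Summable (fun k : ℤ => ((1:ℝ) + (k:ℝ) ^ 2)⁻¹) := by
  apply Summable.of_nat_of_neg <;> simpa using summable_nat_inv_one_add_sq

/-- the fixed constant `∑_{k∈ℤ} 1/(1+k²)`. -/
noncomputable def CS : ℝ := ∑' k : ℤ, ((1:ℝ) + (k:ℝ) ^ 2)⁻¹

lemma CS_nonneg : 0 ≤ CS := tsum_nonneg (fun k => by positivity)

lemma summable_int_inv_one_add_sq_sub : Summable (fun k : ℤ => ((1:ℝ) + ((k:ℝ) - 1) ^ 2)⁻¹) := by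
  have hinj : Function.Injective (fun k : ℤ => k - 1) := by
    intro a b h
    simpa using h
  have h2 := summable_int_inv_one_add_sq.comp_injective hinj
  have : ((fun k : ℤ => ((1:ℝ) + (k:ℝ) ^ 2)⁻¹) ∘ fun k : ℤ => k - 1) =
      fun k : ℤ => ((1:ℝ) + ((k:ℝ) - 1) ^ 2)⁻¹ := by
    funext k
    simp [Function.comp]
  rwa [this] at h2

lemma tsum_int_inv_one_add_sq_sub :
    ∑' k : ℤ, ((1:ℝ) + ((k:ℝ) - 1) ^ 2)⁻¹ = CS := by
  rw [CS, ← (Equiv.subRight (1:ℤ)).tsum_eq (fun k : ℤ => ((1:ℝ) + (k:ℝ) ^ 2)⁻¹)]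
  apply tsum_congr
  intro k
  simp only [Equiv.subRight_apply]
  push_cast
  ring_nf

/-- Uniform-in-`z` summability and bound for `∑_l 1/(1+(z+l)²)`. -/
lemma sum_shift (z : ℝ) :
    Summable (fun l : ℤ => ((1:ℝ) + (z + l) ^ 2)⁻¹) ∧
      ∑' l : ℤ, ((1:ℝ) + (z + l) ^ 2)⁻¹ ≤ 2 * CS := by
  set f : ℤ → ℝ := fun l => ((1:ℝ) + (z + l) ^ 2)⁻¹ with hf
  set l₀ : ℤ := ⌈-z⌉ - 1 with hl₀
  have hw1 : -1 ≤ z + l₀ := by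
    have := Int.le_ceil (-z)
    push_cast [hl₀]
    linarith
  have hw0 : z + l₀ < 0 := by
    have := Int.ceil_lt_add_one (-z)
    push_cast [hl₀]
    linarith
  set g : ℤ → ℝ := fun k => ((1:ℝ) + (k:ℝ) ^ 2)⁻¹ + ((1:ℝ) + ((k:ℝ) - 1) ^ 2)⁻¹ with hg
  have hgs : Summable g := summable_int_inv_one_add_sq.add summable_int_inv_one_add_sq_sub
  have hgt : ∑' k, g k = 2 * CS := by
    rw [hg, Summable.tsum_add summable_int_inv_one_add_sq summable_int_inv_one_add_sq_sub,
      tsum_int_inv_one_add_sq_sub, CS]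
    ring
  have hbound : ∀ k : ℤ, f (k + l₀) ≤ g k := by
    intro k
    have hcast : z + ((k + l₀ : ℤ) : ℝ) = (z + l₀) + k := by push_cast; ring
    rw [hf]
    simp only
    rw [hcast]
    rcases le_or_gt k 0 with hk | hk
    · have hk' : (k:ℝ) ≤ 0 := by exact_mod_cast hk
      have h1 : ((1:ℝ) + ((z + l₀) + k) ^ 2)⁻¹ ≤ ((1:ℝ) + (k:ℝ) ^ 2)⁻¹ := by
        apply inv_anti₀ (by positivity)
        nlinarith
      calc ((1:ℝ) + ((z + l₀) + k) ^ 2)⁻¹ ≤ ((1:ℝ) + (k:ℝ) ^ 2)⁻¹ := h1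
        _ ≤ g k := le_add_of_nonneg_right (by positivity)
    · have hk' : (1:ℝ) ≤ (k:ℝ) := by exact_mod_cast hk
      have h1 : ((1:ℝ) + ((z + l₀) + k) ^ 2)⁻¹ ≤ ((1:ℝ) + ((k:ℝ) - 1) ^ 2)⁻¹ := by
        apply inv_anti₀ (by positivity)
        nlinarith
      calc ((1:ℝ) + ((z + l₀) + k) ^ 2)⁻¹ ≤ ((1:ℝ) + ((k:ℝ) - 1) ^ 2)⁻¹ := h1
        _ ≤ g k := le_add_of_nonneg_left (by positivity)
  have hsum' : Summable (fun k : ℤ => f (k + l₀)) :=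
    Summable.of_nonneg_of_le (fun k => by positivity) hbound hgs
  have hsum : Summable f := by
    have := (Equiv.addRight l₀).summable_iff (f := f)
    rw [← this]
    convert hsum' using 1
    rfl
  refine ⟨hsum, ?_⟩
  have hts : ∑' l, f l = ∑' k, f (k + l₀) :=
    ((Equiv.addRight l₀).tsum_eq f).symm
  rw [hts, ← hgt]
  exact Summable.tsum_le_tsum hbound hsum' hgs

lemma summable_abs_sinc (z : ℝ) {n : ℕ} (hn : 2 ≤ n) :
    Summable (fun l : ℤ => |_root_.sinc (Real.pi * (z + l))| ^ n) := by
  apply Summable.of_nonneg_of_le (fun l => by positivity) (fun l => ?_)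
    (((sum_shift z).1).mul_left 2)
  have h := abs_sinc_pi_pow_le (z + l) hn
  rw [div_eq_mul_inv] at h
  exact h

lemma tsum_abs_sinc_le (z : ℝ) {n : ℕ} (hn : 2 ≤ n) :
    ∑' l : ℤ, |_root_.sinc (Real.pi * (z + l))| ^ n ≤ 4 * CS := by
  have h1 : ∑' l : ℤ, |_root_.sinc (Real.pi * (z + l))| ^ n
      ≤ ∑' l : ℤ, 2 * ((1:ℝ) + (z + l) ^ 2)⁻¹ := by
    apply Summable.tsum_le_tsum _ (summable_abs_sinc z hn) (((sum_shift z).1).mul_left 2)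
    intro l
    have h := abs_sinc_pi_pow_le (z + l) hn
    rw [div_eq_mul_inv] at h
    exact h
  have h2 : ∑' l : ℤ, 2 * ((1:ℝ) + (z + l) ^ 2)⁻¹
      = 2 * ∑' l : ℤ, ((1:ℝ) + (z + l) ^ 2)⁻¹ := tsum_mul_left
  have h3 := (sum_shift z).2
  calc ∑' l : ℤ, |_root_.sinc (Real.pi * (z + l))| ^ n ≤ _ := h1
    _ = 2 * ∑' l : ℤ, ((1:ℝ) + (z + l) ^ 2)⁻¹ := h2
    _ ≤ 2 * (2 * CS) := by linarith
    _ = 4 * CS := by ring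

lemma summable_qs (z : ℝ) {n : ℕ} (hn : 2 ≤ n) (he : Even n) :
    Summable (fun l : ℤ => _root_.sinc (Real.pi * (z + l)) ^ n) := by
  have h := summable_abs_sinc z hn
  simpa only [he.pow_abs] using h

lemma qs_nonneg {n : ℕ} (he : Even n) (z : ℝ) : 0 ≤ Qs n z :=
  tsum_nonneg fun l => he.pow_nonneg _

lemma qs_le {n : ℕ} (hn : 2 ≤ n) (he : Even n) (z : ℝ) : Qs n z ≤ 4 * CS := by
  have := tsum_abs_sinc_le z hn
  unfold Qs
  simpa only [he.pow_abs] using this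

lemma qs_lower {n : ℕ} (hn : 2 ≤ n) (he : Even n) (z : ℝ) :
    (2 / Real.pi) ^ n ≤ Qs n z := by
  set l₀ : ℤ := -⌊z + 1/2⌋ with hl₀
  have hw : |z + l₀| ≤ 1 / 2 := by
    rw [abs_le]
    have h1 := Int.floor_le (z + 1/2)
    have h2 := Int.lt_floor_add_one (z + 1/2)
    constructor <;> (push_cast [hl₀]; linarith)
  have hterm : (2 / Real.pi) ^ n ≤ _root_.sinc (Real.pi * (z + l₀)) ^ n :=
    pow_le_pow_left₀ (by positivity) (sinc_pi_lower _ hw) n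
  refine hterm.trans ?_
  exact Summable.le_tsum (summable_qs z hn he) l₀ (fun j _ => he.pow_nonneg _)

lemma qs_pos {n : ℕ} (hn : 2 ≤ n) (he : Even n) (z : ℝ) : 0 < Qs n z :=
  lt_of_lt_of_le (by positivity) (qs_lower hn he z)

lemma even_q2 (p : ℕ) : Even (2 * p + 2) := ⟨p + 1, by ring⟩

lemma sqrt_qs_lower (p : ℕ) (z : ℝ) :
    (2 / Real.pi) ^ (p + 1) ≤ Real.sqrt (Qs (2 * p + 2) z) := by
  have h := qs_lower (n := 2 * p + 2) (by omega) (even_q2 p) z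
  have h2 : ((2 / Real.pi) ^ (p + 1)) ^ 2 ≤ Qs (2 * p + 2) z := by
    rw [← pow_mul]
    convert h using 2
    ring
  calc (2 / Real.pi) ^ (p + 1) = Real.sqrt (((2 / Real.pi) ^ (p + 1)) ^ 2) :=
        (Real.sqrt_sq (by positivity)).symm
    _ ≤ Real.sqrt (Qs (2 * p + 2) z) := Real.sqrt_le_sqrt h2

lemma sqrt_qs_pos (p : ℕ) (z : ℝ) : 0 < Real.sqrt (Qs (2 * p + 2) z) :=
  lt_of_lt_of_le (by positivity) (sqrt_qs_lower p z)

lemma inv_sqrt_qs_le (p : ℕ) (z : ℝ) :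
    (Real.sqrt (Qs (2 * p + 2) z))⁻¹ ≤ (Real.pi / 2) ^ (p + 1) := by
  have h1 := sqrt_qs_lower p z
  have h2 : (0:ℝ) < (2 / Real.pi) ^ (p + 1) := by positivity
  have := inv_anti₀ h2 h1
  calc (Real.sqrt (Qs (2 * p + 2) z))⁻¹ ≤ ((2 / Real.pi) ^ (p + 1))⁻¹ := this
    _ = (Real.pi / 2) ^ (p + 1) := by
        rw [← inv_pow, inv_div]


lemma exp_eq_neg (x u : ℝ) (K : ℕ) (l : ℤ) :
    Complex.exp (-2 * (Real.pi : ℂ) * Complex.I * (x : ℂ) * ((u : ℂ) + (l : ℂ) * (K : ℂ)))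
      = Complex.exp (((-2 * Real.pi * x * (u + l * K) : ℝ) : ℂ) * Complex.I) := by
  congr 1
  push_cast
  ring

lemma norm_exp_phi (x u : ℝ) (K : ℕ) (l : ℤ) :
    ‖Complex.exp (-2 * (Real.pi : ℂ) * Complex.I * (x : ℂ) * ((u : ℂ) + (l : ℂ) * (K : ℂ)))‖ = 1 := by
  rw [exp_eq_neg, Complex.norm_exp_ofReal_mul_I]

lemma norm_phic_term (p : ℕ) (x u : ℝ) (K : ℕ) (l : ℤ) :
    ‖((_root_.sinc (Real.pi * (u / K + l)) ^ (p + 1) : ℝ) : ℂ) *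
      Complex.exp (-2 * (Real.pi : ℂ) * Complex.I * (x : ℂ) * ((u : ℂ) + (l : ℂ) * (K : ℂ)))‖
      = |_root_.sinc (Real.pi * (u / K + l))| ^ (p + 1) := by
  rw [norm_mul, norm_exp_phi, mul_one, Complex.norm_real, Real.norm_eq_abs, abs_pow]

lemma summable_phic_term {p : ℕ} (hp : 1 ≤ p) (x u : ℝ) (K : ℕ) :
    Summable (fun l : ℤ => ((_root_.sinc (Real.pi * (u / K + l)) ^ (p + 1) : ℝ) : ℂ) *
      Complex.exp (-2 * (Real.pi : ℂ) * Complex.I * (x : ℂ) * ((u : ℂ) + (l : ℂ) * (K : ℂ)))) := by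
  apply Summable.of_norm
  simp only [norm_phic_term]
  exact summable_abs_sinc (u / K) (by omega)

lemma norm_phic_le {p : ℕ} (hp : 1 ≤ p) (K : ℕ) (u x : ℝ) :
    ‖phic K p u x‖ ≤ (Real.pi / 2) ^ (p + 1) * (4 * CS) := by
  unfold phic
  rw [norm_mul, Complex.norm_real, Real.norm_eq_abs,
    abs_of_nonneg (inv_nonneg.mpr (Real.sqrt_nonneg _))]
  have h1 : ‖∑' l : ℤ, ((_root_.sinc (Real.pi * (u / K + l)) ^ (p + 1) : ℝ) : ℂ) *
      Complex.exp (-2 * (Real.pi : ℂ) * Complex.I * (x : ℂ) * ((u : ℂ) + (l : ℂ) * (K : ℂ)))‖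
      ≤ 4 * CS := by
    refine (norm_tsum_le_tsum_norm ?_).trans ?_
    · simp only [norm_phic_term]
      exact summable_abs_sinc (u / K) (by omega)
    · simp only [norm_phic_term]
      exact tsum_abs_sinc_le (u / K) (by omega)
  have h2 := inv_sqrt_qs_le p (u / K)
  have h0 : (0:ℝ) ≤ (Real.sqrt (Qs (2 * p + 2) (u / K)))⁻¹ :=
    inv_nonneg.mpr (Real.sqrt_nonneg _)
  calc (Real.sqrt (Qs (2 * p + 2) (u / K)))⁻¹ * ‖_‖
      ≤ (Real.pi / 2) ^ (p + 1) * (4 * CS) :=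
        mul_le_mul h2 h1 (norm_nonneg _) (by positivity)

lemma muc_nonneg (K p q : ℕ) (hq : 1 ≤ q) (hqp : q ≤ p) (u : ℝ) : 0 ≤ muc K p q u := by
  unfold muc
  apply div_nonneg
  · apply mul_nonneg
    apply mul_nonneg
    · rw [pow_mul']; positivity
    · rw [pow_mul']; positivity
    · exact qs_nonneg ⟨p - q + 1, by omega⟩ _
  · exact (qs_pos (by omega) (even_q2 p) _).le

lemma one_add_lam_muc_pos (K p q : ℕ) (hq : 1 ≤ q) (hqp : q ≤ p) {lam : ℝ} (hlam : 0 ≤ lam)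
    (u : ℝ) : (1:ℝ) ≤ 1 + lam * muc K p q u := by
  nlinarith [muc_nonneg K p q hq hqp u]

lemma qs_add_int (n : ℕ) (z : ℝ) (m : ℤ) : Qs n (z + m) = Qs n z := by
  unfold Qs
  rw [← (Equiv.addLeft m).tsum_eq (fun l : ℤ => _root_.sinc (Real.pi * (z + l)) ^ n)]
  apply tsum_congr
  intro l
  simp only [Equiv.coe_addLeft]
  congr 2
  push_cast
  ring


lemma div_add_int (u : ℝ) (m : ℤ) {K : ℕ} (hK : (K:ℝ) ≠ 0) :
    (u + m * K) / K = u / K + m := by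
  field_simp

lemma muc_sin_form (K p q : ℕ) {hK : (K:ℝ) ≠ 0} (u : ℝ) :
    muc K p q u = (2 * K) ^ (2 * q) * Real.sin (Real.pi * u / K) ^ (2 * q) *
      Qs (2 * p - 2 * q + 2) (u / K) / Qs (2 * p + 2) (u / K) := by
  unfold muc
  congr 2
  rcases eq_or_ne u 0 with h0 | h0
  · rcases Nat.eq_zero_or_pos q with hq0 | hq0
    · subst hq0; simp [_root_.sinc, h0]
    · have h2q : 2 * q ≠ 0 := by omega
      rw [h0]
      simp [mul_zero, zero_div, Real.sin_zero, zero_pow h2q, zero_mul, mul_zero]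
  · have ht : Real.pi * u / K ≠ 0 := by
      apply div_ne_zero (mul_ne_zero Real.pi_ne_zero h0) hK
    unfold _root_.sinc
    rw [if_neg ht]
    rw [div_pow, ← mul_div_assoc, ← mul_pow, ← mul_pow]
    rw [div_eq_iff (pow_ne_zero _ ht)]
    rw [← mul_pow]
    congr 1
    field_simp

lemma muc_add_int (K p q : ℕ) (hK : (K:ℝ) ≠ 0) (u : ℝ) (m : ℤ) :
    muc K p q (u + m * K) = muc K p q u := by
  rw [muc_sin_form K p q (hK := hK), muc_sin_form K p q (hK := hK), div_add_int u m hK,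
    qs_add_int, qs_add_int]
  congr 2
  have harg : Real.pi * (u + m * K) / K = Real.pi * u / K + m * Real.pi := by
    field_simp
  rw [harg, Real.sin_add_int_mul_pi,
    mul_pow ((-1:ℝ) ^ m) (Real.sin (Real.pi * u / K)) (2 * q)]
  have hone : ((-1:ℝ) ^ m) ^ (2 * q) = 1 := by
    rcases Int.even_or_odd m with he | ho
    · rw [he.neg_one_zpow, one_pow]
    · rw [ho.neg_one_zpow]
      exact Even.neg_one_pow ⟨q, by ring⟩
  rw [hone, one_mul]

lemma phic_add_int (K p : ℕ) (hK : (K:ℝ) ≠ 0) (u x : ℝ) (m : ℤ) :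
    phic K p (u + m * K) x = phic K p u x := by
  unfold phic
  rw [div_add_int u m hK, qs_add_int]
  congr 1
  set f : ℤ → ℂ := fun j => ((_root_.sinc (Real.pi * (u / K + j)) ^ (p + 1) : ℝ) : ℂ) *
      Complex.exp (-2 * (Real.pi : ℂ) * Complex.I * (x : ℂ) * ((u : ℂ) + (j : ℂ) * (K : ℂ))) with hfdef
  calc (∑' l : ℤ, ((_root_.sinc (Real.pi * (u / K + m + l)) ^ (p + 1) : ℝ) : ℂ) *
        Complex.exp (-2 * (Real.pi : ℂ) * Complex.I * (x : ℂ) *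
          (((u + m * K : ℝ) : ℂ) + (l : ℂ) * (K : ℂ))))
      = ∑' l : ℤ, f (m + l) := by
        apply tsum_congr
        intro l
        rw [hfdef]
        simp only
        congr 2
        · push_cast
          ring
        · push_cast
          ring
    _ = ∑' j : ℤ, f j := (Equiv.addLeft m).tsum_eq f

lemma conj_phic (K p : ℕ) (u t : ℝ) :
    conj (phic K p u t) = (((Real.sqrt (Qs (2 * p + 2) (u / K)))⁻¹ : ℝ) : ℂ) *
      ∑' l : ℤ, ((_root_.sinc (Real.pi * (u / K + l)) ^ (p + 1) : ℝ) : ℂ) *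
        Complex.exp (2 * (Real.pi : ℂ) * Complex.I * (t : ℂ) * ((u : ℂ) + (l : ℂ) * (K : ℂ))) := by
  unfold phic
  rw [map_mul, Complex.conj_ofReal]
  congr 1
  rw [starRingEnd_apply, tsum_star]
  apply tsum_congr
  intro l
  rw [star_mul']
  rw [show star (((_root_.sinc (Real.pi * (u / K + l)) ^ (p + 1) : ℝ) : ℂ)) =
      ((_root_.sinc (Real.pi * (u / K + l)) ^ (p + 1) : ℝ) : ℂ) from Complex.conj_ofReal _]
  congr 1
  rw [show star (Complex.exp (-2 * (Real.pi : ℂ) * Complex.I * (t : ℂ) *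
      ((u : ℂ) + (l : ℂ) * (K : ℂ)))) =
    (starRingEnd ℂ) (Complex.exp (-2 * (Real.pi : ℂ) * Complex.I * (t : ℂ) *
      ((u : ℂ) + (l : ℂ) * (K : ℂ)))) from rfl]
  rw [← Complex.exp_conj]
  congr 1
  simp only [map_mul, map_add, map_neg, Complex.conj_I, Complex.conj_ofReal, map_ofNat,
    map_intCast, map_natCast]
  ring


lemma measurable_tsum_int {E : Type*} [NormedAddCommGroup E] [MeasurableSpace E] [BorelSpace E]
    [SecondCountableTopology E] {f : ℤ → ℝ → E} (hm : ∀ l, Measurable (f l)) (hs : ∀ u, Summable (fun l => f l u)) :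
    Measurable (fun u => ∑' l, f l u) := by
  have hco : Filter.Tendsto (fun n : ℕ => Finset.Icc (-(n:ℤ)) (n:ℤ))
      Filter.atTop Filter.atTop := by
    apply Filter.tendsto_atTop_finset_of_monotone
    · intro a b hab
      apply Finset.Icc_subset_Icc
      · exact neg_le_neg (by exact_mod_cast hab)
      · exact_mod_cast hab
    · intro k
      refine ⟨k.natAbs, ?_⟩
      simp only [Finset.mem_Icc]
      omega
  refine measurable_of_tendsto_metrizable' (Filter.atTop : Filter ℕ)
    (fun n => Finset.measurable_sum (Finset.Icc (-(n:ℤ)) (n:ℤ)) (fun l _ => hm l)) ?_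
  rw [tendsto_pi_nhds]
  intro u
  exact ((hs u).hasSum).comp hco

lemma measurable_sinc : Measurable _root_.sinc := by
  unfold _root_.sinc
  have h : MeasurableSet {x : ℝ | x = 0} := by
    simpa using measurableSet_singleton (0:ℝ)
  exact Measurable.ite h measurable_const (Real.measurable_sin.div measurable_id)

lemma measurable_arg (K : ℕ) (l : ℤ) : Measurable (fun u : ℝ => Real.pi * (u / K + l)) :=
  ((measurable_id.div_const _).add_const _).const_mul _

lemma measurable_qs {n : ℕ} (hn : 2 ≤ n) (he : Even n) (K : ℕ) :
    Measurable (fun u : ℝ => Qs n (u / K)) := by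
  unfold Qs
  apply measurable_tsum_int
  · intro l
    exact (measurable_sinc.comp (measurable_arg K l)).pow_const n
  · intro u
    exact summable_qs _ hn he

lemma measurable_phic {p : ℕ} (hp : 1 ≤ p) (K : ℕ) (x : ℝ) :
    Measurable (fun u : ℝ => phic K p u x) := by
  unfold phic
  apply Measurable.mul
  · exact Complex.measurable_ofReal.comp
      ((Real.continuous_sqrt.measurable.comp (measurable_qs (by omega) (even_q2 p) K)).inv)
  · apply measurable_tsum_int
    · intro l
      apply Measurable.mul
      · exact Complex.measurable_ofReal.comp
          ((measurable_sinc.comp (measurable_arg K l)).pow_const _)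
      · apply Complex.continuous_exp.measurable.comp
        apply Measurable.const_mul
        exact (Complex.measurable_ofReal.add_const _)
    · intro u
      exact summable_phic_term hp x u K

lemma measurable_muc {q p : ℕ} (hq : 1 ≤ q) (hqp : q ≤ p) (K : ℕ) :
    Measurable (muc K p q) := by
  unfold muc
  apply Measurable.div
  apply Measurable.mul
  apply Measurable.mul
  · exact ((measurable_id.const_mul _).pow_const _)
  · exact ((measurable_sinc.comp ((measurable_id.const_mul _).div_const _)).pow_const _)
  · exact measurable_qs (by omega) ⟨p - q + 1, by omega⟩ K
  · exact measurable_qs (by omega) (even_q2 p) K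


/-- The integrand of the Fourier-integral representation. -/
noncomputable def Fker (K p q : ℕ) (lam x t : ℝ) (u : ℝ) : ℂ :=
  ((_root_.sinc (Real.pi * u / K) ^ (p + 1) : ℝ) : ℂ) * phic K p u x *
      Complex.exp (2 * (Real.pi : ℂ) * Complex.I * (t : ℂ) * (u : ℂ)) /
    (((Real.sqrt (Qs (2 * p + 2) (u / K)) * (1 + lam * muc K p q u) : ℝ)) : ℂ)

lemma measurable_Fker {K p q : ℕ} (hq : 1 ≤ q) (hqp : q ≤ p) (lam x t : ℝ) :
    Measurable (Fker K p q lam x t) := by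
  unfold Fker
  apply Measurable.div
  · apply Measurable.mul
    apply Measurable.mul
    · exact Complex.measurable_ofReal.comp
        ((measurable_sinc.comp ((measurable_id.const_mul _).div_const _)).pow_const _)
    · exact measurable_phic (le_trans hq hqp) K x
    · exact Complex.continuous_exp.measurable.comp
        ((Complex.measurable_ofReal.const_mul _))
  · apply Complex.measurable_ofReal.comp
    apply Measurable.mul
    · exact Real.continuous_sqrt.measurable.comp (measurable_qs (by omega) (even_q2 p) K)
    · exact (((measurable_muc hq hqp K).const_mul lam).const_add 1)

lemma norm_exp_t (t u : ℝ) :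
    ‖Complex.exp (2 * (Real.pi : ℂ) * Complex.I * (t : ℂ) * (u : ℂ))‖ = 1 := by
  rw [show (2 * (Real.pi : ℂ) * Complex.I * (t : ℂ) * (u : ℂ))
      = ((2 * Real.pi * t * u : ℝ) : ℂ) * Complex.I by push_cast; ring]
  rw [Complex.norm_exp_ofReal_mul_I]

lemma norm_Fker_le {K p q : ℕ} (hq : 1 ≤ q) (hqp : q ≤ p) (hK : 1 ≤ K)
    {lam : ℝ} (hlam : 0 ≤ lam) (x t : ℝ) (u : ℝ) :
    ‖Fker K p q lam x t u‖ ≤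
      (2 * ((Real.pi / 2) ^ (p + 1) * (4 * CS)) * (Real.pi / 2) ^ (p + 1)) *
        (1 + (u / K) ^ 2)⁻¹ := by
  have hp : 1 ≤ p := le_trans hq hqp
  have hd1 : (1:ℝ) ≤ 1 + lam * muc K p q u := one_add_lam_muc_pos K p q hq hqp hlam u
  have hsq := sqrt_qs_lower p (u / K)
  have hsqpos := sqrt_qs_pos p (u / K)
  have hdpos : 0 < Real.sqrt (Qs (2 * p + 2) (u / K)) * (1 + lam * muc K p q u) := by
    nlinarith
  unfold Fker
  rw [norm_div, norm_mul, norm_mul, norm_exp_t, mul_one, Complex.norm_real, Real.norm_eq_abs,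
    Complex.norm_real, Real.norm_eq_abs, abs_of_pos hdpos]
  have h1 : |_root_.sinc (Real.pi * u / K) ^ (p + 1)| ≤ 2 * (1 + (u / K) ^ 2)⁻¹ := by
    rw [abs_pow, show Real.pi * u / K = Real.pi * (u / K) by ring]
    have := abs_sinc_pi_pow_le (u / K) (n := p + 1) (by omega)
    rwa [div_eq_mul_inv] at this
  have h2 : ‖phic K p u x‖ ≤ (Real.pi / 2) ^ (p + 1) * (4 * CS) := norm_phic_le hp K u x
  have h3 : (Real.sqrt (Qs (2 * p + 2) (u / K)) * (1 + lam * muc K p q u))⁻¹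
      ≤ (Real.pi / 2) ^ (p + 1) := by
    have hge : (2 / Real.pi) ^ (p + 1) ≤
        Real.sqrt (Qs (2 * p + 2) (u / K)) * (1 + lam * muc K p q u) := by
      nlinarith [pow_pos (div_pos two_pos Real.pi_pos) (p + 1)]
    calc (Real.sqrt (Qs (2 * p + 2) (u / K)) * (1 + lam * muc K p q u))⁻¹
        ≤ ((2 / Real.pi) ^ (p + 1))⁻¹ := inv_anti₀ (by positivity) hge
      _ = (Real.pi / 2) ^ (p + 1) := by rw [← inv_pow, inv_div]
  rw [div_eq_mul_inv]
  have hnn : (0:ℝ) ≤ (1 + (u / K) ^ 2)⁻¹ := by positivity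
  calc |_root_.sinc (Real.pi * u / K) ^ (p + 1)| * ‖phic K p u x‖ *
        (Real.sqrt (Qs (2 * p + 2) (u / K)) * (1 + lam * muc K p q u))⁻¹
      ≤ (2 * (1 + (u / K) ^ 2)⁻¹) * ((Real.pi / 2) ^ (p + 1) * (4 * CS)) *
        (Real.pi / 2) ^ (p + 1) := by
        have hcs := CS_nonneg
        have hpig : (0:ℝ) ≤ (Real.pi / 2) ^ (p + 1) * (4 * CS) := by positivity
        apply mul_le_mul _ h3 (by positivity)
          (mul_nonneg (by positivity) hpig)
        exact mul_le_mul h1 h2 (norm_nonneg _) (by positivity)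
    _ = (2 * ((Real.pi / 2) ^ (p + 1) * (4 * CS)) * (Real.pi / 2) ^ (p + 1)) *
        (1 + (u / K) ^ 2)⁻¹ := by ring

lemma integrable_Fker {K p q : ℕ} (hq : 1 ≤ q) (hqp : q ≤ p) (hK : 1 ≤ K)
    {lam : ℝ} (hlam : 0 ≤ lam) (x t : ℝ) :
    Integrable (Fker K p q lam x t) := by
  have hK0 : (K:ℝ) ≠ 0 := Nat.cast_ne_zero.mpr (by omega)
  have hg : Integrable (fun u : ℝ =>
      (2 * ((Real.pi / 2) ^ (p + 1) * (4 * CS)) * (Real.pi / 2) ^ (p + 1)) *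
        (1 + (u / K) ^ 2)⁻¹) := by
    exact (integrable_inv_one_add_sq.comp_div hK0).const_mul _
  exact hg.mono' ((measurable_Fker hq hqp lam x t).aestronglyMeasurable)
    (Filter.Eventually.of_forall (fun u => norm_Fker_le hq hqp hK hlam x t u))


lemma tsum_Fker_shift {K p q : ℕ} (hq : 1 ≤ q) (hqp : q ≤ p) (hK : 1 ≤ K)
    {lam : ℝ} (hlam : 0 ≤ lam) (x t v : ℝ) :
    ∑' l : ℤ, Fker K p q lam x t (v + l * K) =
      phic K p v x * conj (phic K p v t) / (((1 + lam * muc K p q v : ℝ)) : ℂ) := by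
  have hK0 : (K:ℝ) ≠ 0 := Nat.cast_ne_zero.mpr (by omega)
  set S : ℝ := Real.sqrt (Qs (2 * p + 2) (v / K)) with hS
  set M : ℝ := 1 + lam * muc K p q v with hM
  have hSpos : 0 < S := sqrt_qs_pos p (v / K)
  have hMpos : (0:ℝ) < M := lt_of_lt_of_le one_pos (one_add_lam_muc_pos K p q hq hqp hlam v)
  set c : ℂ := phic K p v x / ((S * M : ℝ) : ℂ) with hc
  have hterm : ∀ l : ℤ, Fker K p q lam x t (v + l * K) =
      (((_root_.sinc (Real.pi * (v / K + l)) ^ (p + 1) : ℝ)) : ℂ) *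
        Complex.exp (2 * (Real.pi : ℂ) * Complex.I * (t : ℂ) *
          ((v : ℂ) + (l : ℂ) * (K : ℂ))) * c := by
    intro l
    unfold Fker
    rw [phic_add_int K p hK0 v x l, muc_add_int K p q hK0 v l, div_add_int v l hK0,
      qs_add_int]
    rw [show Real.pi * (v + l * K) / K = Real.pi * (v / K + l) by field_simp]
    rw [show ((v + l * K : ℝ) : ℂ) = (v : ℂ) + (l : ℂ) * (K : ℂ) by push_cast; ring]
    rw [hc, ← hS, ← hM]
    ring
  rw [tsum_congr hterm, tsum_mul_right]
  have hsum : (∑' l : ℤ, (((_root_.sinc (Real.pi * (v / K + l)) ^ (p + 1) : ℝ)) : ℂ) *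
      Complex.exp (2 * (Real.pi : ℂ) * Complex.I * (t : ℂ) * ((v : ℂ) + (l : ℂ) * (K : ℂ))))
      = (S : ℂ) * conj (phic K p v t) := by
    rw [conj_phic K p v t, ← hS, ← mul_assoc]
    rw [show ((S:ℂ)) * ((S⁻¹ : ℝ) : ℂ) = 1 by
      push_cast
      exact mul_inv_cancel₀ (Complex.ofReal_ne_zero.mpr hSpos.ne')]
    rw [one_mul]
  rw [hsum, hc]
  have hSne : ((S:ℝ):ℂ) ≠ 0 := Complex.ofReal_ne_zero.mpr hSpos.ne'
  have hMne : ((M:ℝ):ℂ) ≠ 0 := Complex.ofReal_ne_zero.mpr hMpos.ne'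
  rw [Complex.ofReal_mul]
  field_simp


lemma integrable_Fker_shift {K p q : ℕ} (hq : 1 ≤ q) (hqp : q ≤ p) (hK : 1 ≤ K)
    {lam : ℝ} (hlam : 0 ≤ lam) (x t : ℝ) (l : ℤ) :
    Integrable (fun v => Fker K p q lam x t (v + l * K))
      (volume.restrict (Set.Ioc (0:ℝ) (K:ℝ))) :=
  ((integrable_Fker hq hqp hK hlam x t).comp_add_right ((l:ℝ) * K)).integrableOn

lemma integral_Fker_eq {K p q : ℕ} (hq : 1 ≤ q) (hqp : q ≤ p) (hK : 1 ≤ K)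
    {lam : ℝ} (hlam : 0 ≤ lam) (x t : ℝ) :
    ∫ u : ℝ, Fker K p q lam x t u =
      ∫ v in Set.Ioc (0:ℝ) (K:ℝ), ∑' l : ℤ, Fker K p q lam x t (v + l * K) := by
  have hKR : (1:ℝ) ≤ (K:ℝ) := by exact_mod_cast hK
  have hKpos : (0:ℝ) < K := by linarith
  have hK0 : (K:ℝ) ≠ 0 := hKpos.ne'
  have hInt := integrable_Fker hq hqp hK hlam x t
  set F := Fker K p q lam x t with hF
  set s : ℤ → Set ℝ := fun l => Set.Ioc ((l:ℝ) * K) ((l:ℝ) * K + K) with hs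
  have hcover : (⋃ l : ℤ, s l) = Set.univ := by
    apply Set.eq_univ_of_forall
    intro u
    refine Set.mem_iUnion.mpr ⟨⌈u / K⌉ - 1, ?_⟩
    have h1 : (⌈u / K⌉ : ℝ) - 1 < u / K := by
      have := Int.ceil_lt_add_one (u / K)
      linarith
    have h2 : u / K ≤ (⌈u / K⌉ : ℝ) := Int.le_ceil _
    simp only [hs, Set.mem_Ioc]
    constructor
    · push_cast
      calc ((⌈u / K⌉ : ℝ) - 1) * K < (u / K) * K := by
            exact mul_lt_mul_of_pos_right h1 hKpos
        _ = u := by field_simp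
    · push_cast
      calc u = (u / K) * K := by field_simp
        _ ≤ ((⌈u / K⌉ : ℝ) - 1) * K + K := by nlinarith
  have hdisj : Pairwise (Function.onFun Disjoint s) := by
    intro a b hab
    rw [Function.onFun, hs]
    simp only
    rw [Set.Ioc_disjoint_Ioc]
    rcases lt_or_gt_of_ne hab with h | h
    · have : (a:ℝ) + 1 ≤ b := by exact_mod_cast h
      calc min ((a:ℝ) * K + K) ((b:ℝ) * K + K) ≤ (a:ℝ) * K + K := min_le_left _ _
        _ ≤ (b:ℝ) * K := by nlinarith
        _ ≤ max ((a:ℝ) * K) ((b:ℝ) * K) := le_max_right _ _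
    · have : (b:ℝ) + 1 ≤ a := by exact_mod_cast h
      calc min ((a:ℝ) * K + K) ((b:ℝ) * K + K) ≤ (b:ℝ) * K + K := min_le_right _ _
        _ ≤ (a:ℝ) * K := by nlinarith
        _ ≤ max ((a:ℝ) * K) ((b:ℝ) * K) := le_max_left _ _
  have h1 : ∫ u : ℝ, F u = ∑' l : ℤ, ∫ u in s l, F u := by
    rw [← setIntegral_univ (f := F), ← hcover]
    exact integral_iUnion (fun l => measurableSet_Ioc) hdisj
      (hcover ▸ hInt.integrableOn)
  have h2 : ∀ l : ℤ, ∫ u in s l, F u = ∫ v in Set.Ioc (0:ℝ) (K:ℝ), F (v + l * K) := by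
    intro l
    rw [← intervalIntegral.integral_of_le (by nlinarith : (l:ℝ) * K ≤ (l:ℝ) * K + K),
      ← intervalIntegral.integral_of_le (by linarith : (0:ℝ) ≤ (K:ℝ)),
      intervalIntegral.integral_comp_add_right (a := (0:ℝ)) (b := (K:ℝ)) F ((l:ℝ) * K),
      zero_add, add_comm (K:ℝ) ((l:ℝ) * K)]
  have h3 : Summable (fun l : ℤ => ∫ v in Set.Ioc (0:ℝ) (K:ℝ), ‖F (v + l * K)‖) := by
    set D : ℝ := 2 * ((Real.pi / 2) ^ (p + 1) * (4 * CS)) * (Real.pi / 2) ^ (p + 1) with hD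
    have hDpos : 0 ≤ D := by
      have h := norm_Fker_le hq hqp hK hlam x t 0
      have h0 : (0:ℝ) ≤ ‖Fker K p q lam x t 0‖ := norm_nonneg _
      have : (0:ℝ) < (1 + ((0:ℝ) / K) ^ 2)⁻¹ := by positivity
      nlinarith
    set b : ℤ → ℝ := fun l => ((1:ℝ) + (l:ℝ) ^ 2)⁻¹ + ((1:ℝ) + ((l:ℝ) + 1) ^ 2)⁻¹ with hb
    have hbs : Summable b := by
      apply Summable.add summable_int_inv_one_add_sq
      have hinj : Function.Injective (fun k : ℤ => k + 1) := fun a b h => by simpa using h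
      have h2' := summable_int_inv_one_add_sq.comp_injective hinj
      have : ((fun k : ℤ => ((1:ℝ) + (k:ℝ) ^ 2)⁻¹) ∘ fun k : ℤ => k + 1) =
          fun k : ℤ => ((1:ℝ) + ((k:ℝ) + 1) ^ 2)⁻¹ := by
        funext k
        simp [Function.comp]
      rwa [this] at h2'
    apply Summable.of_nonneg_of_le
      (fun l => integral_nonneg (fun v => norm_nonneg _)) _ ((hbs.mul_left (D * K)))
    intro l
    have hbound : ∀ v ∈ Set.Ioc (0:ℝ) (K:ℝ), ‖F (v + l * K)‖ ≤ D * b l := by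
      intro v hv
      rcases hv with ⟨hv0, hvK⟩
      have hvK' : v / K ≤ 1 := by rw [div_le_one hKpos]; exact hvK
      have hv0' : 0 < v / K := div_pos hv0 hKpos
      have h := norm_Fker_le hq hqp hK hlam x t (v + l * K)
      rw [← hD] at h
      have harg : (v + (l:ℝ) * K) / K = v / K + l := div_add_int v l hK0
      rw [harg] at h
      have hkey : ((1:ℝ) + (v / K + l) ^ 2)⁻¹ ≤ b l := by
        rcases le_or_gt 0 l with hl | hl
        · have hl' : (0:ℝ) ≤ l := by exact_mod_cast hl
          have : ((1:ℝ) + (v / K + l) ^ 2)⁻¹ ≤ ((1:ℝ) + (l:ℝ) ^ 2)⁻¹ := by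
            apply inv_anti₀ (by positivity)
            nlinarith
          calc ((1:ℝ) + (v / K + l) ^ 2)⁻¹ ≤ ((1:ℝ) + (l:ℝ) ^ 2)⁻¹ := this
            _ ≤ b l := le_add_of_nonneg_right (by positivity)
        · have hl' : (l:ℝ) + 1 ≤ 0 := by
            have : l + 1 ≤ 0 := by omega
            exact_mod_cast this
          have : ((1:ℝ) + (v / K + l) ^ 2)⁻¹ ≤ ((1:ℝ) + ((l:ℝ) + 1) ^ 2)⁻¹ := by
            apply inv_anti₀ (by positivity)
            nlinarith
          calc ((1:ℝ) + (v / K + l) ^ 2)⁻¹ ≤ ((1:ℝ) + ((l:ℝ) + 1) ^ 2)⁻¹ := this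
            _ ≤ b l := le_add_of_nonneg_left (by positivity)
      have hbnn : 0 ≤ b l := by rw [hb]; positivity
      calc ‖F (v + l * K)‖ ≤ D * ((1:ℝ) + (v / K + l) ^ 2)⁻¹ := h
        _ ≤ D * b l := by nlinarith
    calc ∫ v in Set.Ioc (0:ℝ) (K:ℝ), ‖F (v + l * K)‖
        ≤ ∫ _v in Set.Ioc (0:ℝ) (K:ℝ), D * b l := by
          apply setIntegral_mono_on
            ((integrable_Fker_shift hq hqp hK hlam x t l).norm)
            (integrableOn_const (by rw [Real.volume_Ioc]; exact ENNReal.ofReal_ne_top))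
            measurableSet_Ioc hbound
      _ = D * K * b l := by
          rw [setIntegral_const, Real.volume_real_Ioc_of_le (by linarith), smul_eq_mul,
            sub_zero]
          ring
  have h4 := integral_tsum_of_summable_integral_norm
    (fun l => integrable_Fker_shift hq hqp hK hlam x t l) h3
  rw [h1, tsum_congr h2, h4]

end Aux

theorem stmt6 (p q K : ℕ) (hq : 1 ≤ q) (hqp : q ≤ p) (hK : 1 ≤ K)
    (lam : ℝ) (hlam : 0 ≤ lam) (x t : ℝ) :
    Wker K p q lam x t =
      ∫ u : ℝ,
        ((_root_.sinc (Real.pi * u / K) ^ (p + 1) : ℝ) : ℂ) * phic K p u x *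
            Complex.exp (2 * (Real.pi : ℂ) * Complex.I * (t : ℂ) * (u : ℂ)) /
          (((Real.sqrt (Qs (2 * p + 2) (u / K)) * (1 + lam * muc K p q u) : ℝ)) : ℂ) := by
  have hKR : (1:ℝ) ≤ (K:ℝ) := by exact_mod_cast hK
  calc Wker K p q lam x t
      = ∫ v in Set.Ioc (0:ℝ) (K:ℝ),
          phic K p v x * conj (phic K p v t) / (((1 + lam * muc K p q v : ℝ)) : ℂ) := by
        unfold Wker
        rw [intervalIntegral.integral_of_le (by linarith)]
    _ = ∫ v in Set.Ioc (0:ℝ) (K:ℝ), ∑' l : ℤ, Aux.Fker K p q lam x t (v + l * K) := by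
        apply integral_congr_ae
        apply Filter.EventuallyEq.restrict
        apply Filter.Eventually.of_forall
        intro v
        exact (Aux.tsum_Fker_shift hq hqp hK hlam x t v).symm
    _ = ∫ u : ℝ, Aux.Fker K p q lam x t u :=
        (Aux.integral_Fker_eq hq hqp hK hlam x t).symm
    _ = _ := rfl
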